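/- If X is a topological space such that Δ(X) > sup{t(x,X) : x ∈ D} for some dense set D ⊆ X, then X is maximally resolvable, i.e., Δ(X)-resolvable. -/

import Mathlib

universe u

open Cardinal Set

/-- A space is `κ`-resolvable iff it has `κ` pairwise disjoint dense subsets. -/
def Resolvable (X : Type u) [TopologicalSpace X] (κ : Cardinal.{u}) : Prop :=
  ∃ (ι : Type u) (D : ι → Set X), #ι = κ ∧ (∀ i, Dense (D i)) ∧
    Pairwise (Function.onFun Disjoint D)

/-- `L` is left-separated: it has a well-ordering all of whose initial segments
are closed in the subspace `L`. -/
def LeftSeparated {X : Type u} [TopologicalSpace X] (L : Set X) : Prop :=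
  ∃ r : L → L → Prop, IsWellOrder L r ∧ ∀ x : L, IsClosed {y : L | r y x}

/-- `R` is right-separated: it has a well-ordering all of whose initial segments
are open in the subspace `R`. -/
def RightSeparated {X : Type u} [TopologicalSpace X] (R : Set X) : Prop :=
  ∃ r : R → R → Prop, IsWellOrder R r ∧ ∀ x : R, IsOpen {y : R | r y x}

/-- The dispersion character `Δ(X)`: the minimal cardinality of a nonempty open set. -/
noncomputable def dispersion (X : Type u) [TopologicalSpace X] : Cardinal.{u} :=
  sInf {c | ∃ G : Set X, IsOpen G ∧ G.Nonempty ∧ #G = c}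

/-- The tightness of `x` in `X`: the least infinite `l` such that whenever
`x ∈ closure A` there is `B ⊆ A` with `#B ≤ l` and `x ∈ closure B`. -/
noncomputable def tightnessAt (X : Type u) [TopologicalSpace X] (x : X) : Cardinal.{u} :=
  sInf {l | ℵ₀ ≤ l ∧ ∀ A : Set X, x ∈ closure A → ∃ B ⊆ A, #B ≤ l ∧ x ∈ closure B}

section Aux

variable {X : Type u} [TopologicalSpace X]

/-- Transfinite recursion producing a family of sets, each depending on the union of
the previously constructed ones. -/
lemma exists_recFamily (β : Type u) [LinearOrder β] [WellFoundedLT β]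
    (C : β → Set X → Set X) :
    ∃ B : β → Set X, ∀ b, B b = C b (⋃ c : {c : β // c < b}, B c) := by
  refine ⟨WellFounded.fix wellFounded_lt
    (fun b rec => C b (⋃ c : {c : β // c < b}, rec c c.2)), fun b => ?_⟩
  exact WellFounded.fix_eq _ _ b

/-- In a "minimal" open set `U`, removing fewer than `#U` points leaves a set
that is still dense in `U`. -/
lemma subset_closure_sdiff {U S : Set X} (hU : IsOpen U)
    (hmin : ∀ V, IsOpen V → V.Nonempty → V ⊆ U → #U ≤ #V)
    (hS : #S < #U) : U ⊆ closure (U \ S) := by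
  intro x hx
  by_contra hxc
  have hVopen : IsOpen (U ∩ (closure (U \ S))ᶜ) := hU.inter isClosed_closure.isOpen_compl
  have hVS : U ∩ (closure (U \ S))ᶜ ⊆ S := by
    rintro v ⟨hvU, hvc⟩
    by_contra hvS
    exact hvc (subset_closure ⟨hvU, hvS⟩)
  have h1 : #U ≤ #(U ∩ (closure (U \ S))ᶜ : Set X) :=
    hmin _ hVopen ⟨x, hx, hxc⟩ inter_subset_left
  exact absurd (h1.trans (mk_le_mk_of_subset hVS)) (not_le.mpr hS)

/-- Every nonempty open set contains a nonempty open subset of minimal cardinality. -/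
lemma exists_minimal_open {W : Set X} (hW : IsOpen W) (hWne : W.Nonempty) :
    ∃ U, IsOpen U ∧ U.Nonempty ∧ U ⊆ W ∧
      ∀ V, IsOpen V → V.Nonempty → V ⊆ U → #U ≤ #V := by
  have hs : {c : Cardinal | ∃ V : Set X, IsOpen V ∧ V.Nonempty ∧ V ⊆ W ∧ #V = c}.Nonempty :=
    ⟨#W, W, hW, hWne, subset_rfl, rfl⟩
  obtain ⟨U, hUo, hUne, hUW, hUc⟩ := csInf_mem hs
  exact ⟨U, hUo, hUne, hUW, fun V hVo hVne hVU =>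
    hUc ▸ csInf_le' ⟨V, hVo, hVne, hVU.trans hUW, rfl⟩⟩

/-- The key construction: inside a "minimal" open set `U`, one can find `#ι` pairwise
disjoint subsets of `U`, each of which is dense in `U`, provided there is a dense set of
points with tightness `≤ μ < #U`. -/
lemma exists_disjoint_dense_family {D : Set X} (hD : Dense D) {μ : Cardinal.{u}}
    (hμ : ℵ₀ ≤ μ)
    (htight : ∀ x ∈ D, ∀ A : Set X, x ∈ closure A → ∃ B ⊆ A, #B ≤ μ ∧ x ∈ closure B)
    {U : Set X} (hU : IsOpen U)
    (hmin : ∀ V, IsOpen V → V.Nonempty → V ⊆ U → #U ≤ #V)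
    (hμU : μ < #U) (ι : Type u) (hι : #ι ≤ #U) :
    ∃ F : ι → Set X, (∀ i, F i ⊆ U) ∧ (∀ i, U ⊆ closure (F i)) ∧
      Pairwise (Function.onFun Disjoint F) := by
  have hAlephU : ℵ₀ ≤ #U := hμ.trans hμU.le
  set ν : Cardinal.{u} := #(↥(D ∩ U) × ι) with hν
  have hνU : ν ≤ #U := by
    have h1 : #(↥(D ∩ U)) ≤ #U := mk_le_mk_of_subset inter_subset_right
    calc ν = #(↥(D ∩ U)) * #ι := by rw [hν, mk_prod, lift_id, lift_id]
    _ ≤ #U * #U := mul_le_mul' h1 hι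
    _ = #U := mul_eq_self hAlephU
  set β := ν.ord.ToType with hβ
  have hβν : #β = #(↥(D ∩ U) × ι) := by rw [hβ, mk_ord_toType]
  obtain ⟨e⟩ := Cardinal.eq.mp hβν
  classical
  set C : β → Set X → Set X := fun b used =>
    if h : ∃ B, B ⊆ U \ used ∧ #B ≤ μ ∧ ((e b).1 : X) ∈ closure B then h.choose else ∅
    with hC
  obtain ⟨B, hB⟩ := exists_recFamily β C
  have key : ∀ b : β, B b ⊆ U \ (⋃ c : {c : β // c < b}, B c) ∧ #(B b) ≤ μ ∧
      ((e b).1 : X) ∈ closure (B b) := by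
    intro b
    induction b using WellFoundedLT.induction with
    | _ b IH =>
      set used := ⋃ c : {c : β // c < b}, B c with hused
      have husedlt : #used < #U := by
        have h1 : #used ≤ #{c : β // c < b} * ⨆ c : {c : β // c < b}, #(B c) :=
          mk_iUnion_le _
        have h2 : (⨆ c : {c : β // c < b}, #(B c)) ≤ μ := by
          rcases isEmpty_or_nonempty {c : β // c < b} with hE | hNE
          · rw [ciSup_of_empty]
            exact zero_le (a := μ)
          · exact ciSup_le' fun c => (IH c c.2).2.1
        have h3 : #{c : β // c < b} < #U := by
          have : #{c : β // c < b} < ν := by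
            have := mk_Iio_ord_toType (c := ν) b
            exact this
          exact this.trans_le hνU
        calc #used ≤ #{c : β // c < b} * μ := h1.trans (mul_le_mul' le_rfl h2)
        _ < #U := mul_lt_of_lt hAlephU h3 hμU
      have hxDU : ((e b).1 : X) ∈ D ∩ U := (e b).1.2
      have hxcl : ((e b).1 : X) ∈ closure (U \ used) :=
        subset_closure_sdiff hU hmin husedlt hxDU.2
      have hex : ∃ B', B' ⊆ U \ used ∧ #B' ≤ μ ∧ ((e b).1 : X) ∈ closure B' :=
        htight _ hxDU.1 _ hxcl
      have hBb : B b = hex.choose := by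
        rw [hB b, hC]
        exact dif_pos hex
      rw [hBb]
      exact hex.choose_spec
  refine ⟨fun i => ⋃ b : {b : β // (e b).2 = i}, B b, ?_, ?_, ?_⟩
  · intro i
    exact iUnion_subset fun b => ((key b).1).trans diff_subset
  · intro i x hx
    have hDU : ∀ y, y ∈ U ∩ D → y ∈ closure (⋃ b : {b : β // (e b).2 = i}, B b) := by
      rintro y ⟨hyU, hyD⟩
      set b := e.symm (⟨y, hyD, hyU⟩, i) with hb
      have he : e b = (⟨y, hyD, hyU⟩, i) := e.apply_symm_apply _
      have h1 : ((e b).1 : X) ∈ closure (B b) := (key b).2.2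
      have h2 : B b ⊆ ⋃ b' : {b' : β // (e b').2 = i}, B b' :=
        subset_iUnion (fun b' : {b' : β // (e b').2 = i} => B b') ⟨b, by rw [he]⟩
      have : ((e b).1 : X) = y := by rw [he]
      rw [this] at h1
      exact closure_mono h2 h1
    have hsub : U ⊆ closure (U ∩ D) := hD.open_subset_closure_inter hU
    exact closure_minimal (fun y hy => hDU y hy) isClosed_closure (hsub hx)
  · intro i j hij
    rw [Function.onFun, Set.disjoint_left]
    rintro y hyi hyj
    obtain ⟨⟨b, hbi⟩, hy⟩ := mem_iUnion.mp hyi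
    obtain ⟨⟨b', hbj⟩, hy'⟩ := mem_iUnion.mp hyj
    have hbb : b ≠ b' := fun hE => hij (by rw [← hbi, hE, hbj])
    rcases hbb.lt_or_gt with hlt | hlt
    · exact ((key b').1 hy').2 (mem_iUnion.mpr ⟨⟨b, hlt⟩, hy⟩)
    · exact ((key b).1 hy).2 (mem_iUnion.mpr ⟨⟨b', hlt⟩, hy'⟩)

end Aux

/-- If `Δ(X) > sup {t(x,X) : x ∈ D}` for some dense `D`, then `X` is maximally resolvable. -/
theorem stmt4 {X : Type u} [TopologicalSpace X] (D : Set X) (hD : Dense D)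
    (h : (⨆ x : D, tightnessAt X ↑x) < dispersion X) :
    Resolvable X (dispersion X) := by
  classical
  rcases isEmpty_or_nonempty X with hE | hNE
  · exact ⟨(dispersion X).out, fun _ => (∅ : Set X), Cardinal.mk_out _,
      fun _ => fun x => isEmptyElim x, fun i j _ => by
        simp [Function.onFun]⟩
  set κ := dispersion X with hκ
  set μ := ⨆ x : D, tightnessAt X ↑x with hμdef
  -- dispersion is a lower bound for cardinalities of nonempty open sets
  have hκle : ∀ G : Set X, IsOpen G → G.Nonempty → κ ≤ #G := fun G hGo hGne =>
    csInf_le' ⟨G, hGo, hGne, rfl⟩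
  -- tightness facts
  have htightAt : ∀ x ∈ D, ℵ₀ ≤ tightnessAt X x ∧
      ∀ A : Set X, x ∈ closure A → ∃ B ⊆ A, #B ≤ tightnessAt X x ∧ x ∈ closure B := by
    intro x hx
    have hne : {l : Cardinal | ℵ₀ ≤ l ∧
        ∀ A : Set X, x ∈ closure A → ∃ B ⊆ A, #B ≤ l ∧ x ∈ closure B}.Nonempty := by
      refine ⟨max ℵ₀ #X, le_max_left _ _, fun A hA => ⟨A, subset_rfl, ?_, hA⟩⟩
      exact le_trans (mk_set_le A) (le_max_right _ _)
    exact csInf_mem hne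
  have htμ : ∀ x ∈ D, tightnessAt X x ≤ μ := by
    intro x hx
    exact le_ciSup (Cardinal.bddAbove_range _) (⟨x, hx⟩ : D)
  have htight : ∀ x ∈ D, ∀ A : Set X, x ∈ closure A → ∃ B ⊆ A, #B ≤ μ ∧ x ∈ closure B := by
    intro x hx A hA
    obtain ⟨B, hBA, hBle, hBcl⟩ := (htightAt x hx).2 A hA
    exact ⟨B, hBA, hBle.trans (htμ x hx), hBcl⟩
  have hμaleph : ℵ₀ ≤ μ := by
    obtain ⟨x, hx⟩ := hD.nonempty
    exact ((htightAt x hx).1).trans (htμ x hx)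
  -- Zorn: a maximal pairwise disjoint family of minimal nonempty open sets
  set Good : Set X → Prop := fun U => IsOpen U ∧ U.Nonempty ∧
    ∀ V, IsOpen V → V.Nonempty → V ⊆ U → #U ≤ #V with hGood
  set S : Set (Set (Set X)) := {𝒰 | (∀ U ∈ 𝒰, Good U) ∧ 𝒰.Pairwise Disjoint} with hS
  obtain ⟨𝒰, h𝒰⟩ := zorn_subset S (by
    intro c hcS hchain
    refine ⟨⋃₀ c, ⟨?_, ?_⟩, fun s hs => subset_sUnion_of_mem hs⟩
    · rintro U ⟨𝒜, h𝒜c, hU𝒜⟩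
      exact (hcS h𝒜c).1 U hU𝒜
    · rintro U ⟨𝒜, h𝒜c, hU𝒜⟩ U' ⟨𝒜', h𝒜'c, hU'𝒜'⟩ hne
      rcases hchain.total h𝒜c h𝒜'c with hsub | hsub
      · exact (hcS h𝒜'c).2 (hsub hU𝒜) hU'𝒜' hne
      · exact (hcS h𝒜c).2 hU𝒜 (hsub hU'𝒜') hne)
  have h𝒰S : 𝒰 ∈ S := h𝒰.1
  -- the union of the maximal family is dense
  have hdense : closure (⋃₀ 𝒰) = Set.univ := by
    by_contra hne
    have hWne : ((closure (⋃₀ 𝒰))ᶜ).Nonempty := by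
      rw [nonempty_compl]
      exact hne
    obtain ⟨U', hU'o, hU'ne, hU'W, hU'min⟩ :=
      exists_minimal_open isClosed_closure.isOpen_compl hWne
    have hnotmem : U' ∉ 𝒰 := by
      intro hmem
      obtain ⟨x, hx⟩ := hU'ne
      exact hU'W hx (subset_closure ⟨U', hmem, hx⟩)
    have hins : insert U' 𝒰 ∈ S := by
      constructor
      · rintro U (rfl | hU)
        · exact ⟨hU'o, hU'ne, hU'min⟩
        · exact h𝒰S.1 U hU
      · refine (Set.pairwise_insert_of_symm).mpr
          ⟨h𝒰S.2, fun U hU _ => ?_⟩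
        rw [Set.disjoint_left]
        intro y hyU' hyU
        exact hU'W hyU' (subset_closure ⟨U, hU, hyU⟩)
    have := h𝒰.2 hins (subset_insert _ _)
    exact hnotmem (this (mem_insert _ _))
  -- apply the construction in each member of the family
  have hall : ∀ U ∈ 𝒰, ∃ F : κ.out → Set X, (∀ i, F i ⊆ U) ∧ (∀ i, U ⊆ closure (F i)) ∧
      Pairwise (Function.onFun Disjoint F) := by
    intro U hU
    obtain ⟨hUo, hUne, hUmin⟩ := h𝒰S.1 U hU
    have hκU : κ ≤ #U := hκle U hUo hUne
    exact exists_disjoint_dense_family hD hμaleph htight hUo hUmin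
      (lt_of_lt_of_le h hκU) κ.out ((Cardinal.mk_out κ).le.trans hκU)
  choose F hF1 hF2 hF3 using hall
  refine ⟨κ.out, fun i => ⋃ (U : Set X) (hU : U ∈ 𝒰), F U hU i, Cardinal.mk_out κ, ?_, ?_⟩
  · intro i
    rw [dense_iff_closure_eq]
    refine eq_univ_of_univ_subset ?_
    have h1 : ⋃₀ 𝒰 ⊆ closure (⋃ (U : Set X) (hU : U ∈ 𝒰), F U hU i) := by
      rintro y ⟨U, hU, hyU⟩
      refine closure_mono ?_ (hF2 U hU i hyU)
      exact fun z hz => mem_iUnion.mpr ⟨U, mem_iUnion.mpr ⟨hU, hz⟩⟩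
    calc Set.univ = closure (⋃₀ 𝒰) := hdense.symm
    _ ⊆ closure (closure (⋃ (U : Set X) (hU : U ∈ 𝒰), F U hU i)) := closure_mono h1
    _ = _ := closure_closure
  · intro i j hij
    rw [Function.onFun, Set.disjoint_left]
    intro y hyi hyj
    obtain ⟨U, hyU⟩ := mem_iUnion.mp hyi
    obtain ⟨hU, hyUi⟩ := mem_iUnion.mp hyU
    obtain ⟨U', hyU'⟩ := mem_iUnion.mp hyj
    obtain ⟨hU', hyU'j⟩ := mem_iUnion.mp hyU'
    by_cases hUU : U = U'
    · subst hUU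
      have : hU' = hU := rfl
      rw [this] at hyU'j
      exact Set.disjoint_left.mp (hF3 U hU hij) hyUi hyU'j
    · exact Set.disjoint_left.mp (h𝒰S.2 hU hU' hUU)
        (hF1 U hU i hyUi) (hF1 U' hU' j hyU'j)
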